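/- Let m ≥ 1, α ≥ 1, and let X = T(A_0, A_1, …, A_{α−1}) be the α×α block upper-triangular Toeplitz matrix with blocks A_j ∈ ℂ^{m×m}. Then E_α(I_m)·Xᵀ·E_α(I_m)·X = I_{αm} (equivalently, A_0ᵀA_0 = I_m and Σ_{j=0}^{n} A_jᵀ A_{n−j} = 0 for 1 ≤ n ≤ α−1) if and only if A_0 ∈ O_m(ℂ) and there exist skew-symmetric matrices Z_1, …, Z_{α−1} ∈ ℂ^{m×m} such that A_n = A_0·W_n for 1 ≤ n ≤ α−1, where W_1 := (1/2)Z_1 and W_{n+1} := (1/2)( Z_{n+1} − Σ_{j=1}^{n} W_jᵀ W_{n+1−j} ) for n ≥ 1. Moreover, the matrices Z_1, …, Z_{α−1} are uniquely determined by X. -/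

import Mathlib

open Matrix

noncomputable section

/-- Form (0T0): block matrix partitioned by Jordan structure `(α, m)` whose `(r,s)` block,
viewed as an `α r × α s` array of `m r × m s` blocks, is a rectangular block
upper-triangular Toeplitz matrix aligned to the top-right corner. -/
def IsForm0T0 {N : ℕ} (α m : Fin N → ℕ)
    (X : Matrix (Σ r : Fin N, Fin (α r) × Fin (m r)) (Σ r : Fin N, Fin (α r) × Fin (m r)) ℂ) :
    Prop :=
  ∃ A : ∀ r s : Fin N, ℕ → Matrix (Fin (m r)) (Fin (m s)) ℂ,
    ∀ (r s : Fin N) (i : Fin (α r)) (j : Fin (α s)) (a : Fin (m r)) (b : Fin (m s)),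
      X ⟨r, (i, a)⟩ ⟨s, (j, b)⟩ =
        if (i : ℕ) + (α s - min (α r) (α s)) ≤ (j : ℕ) then
          A r s ((j : ℕ) - (i : ℕ) - (α s - min (α r) (α s))) a b
        else 0

/-- `E_b(I_m)`: the `bm × bm` block matrix with `I_m` on the block anti-diagonal. -/
def revE (b m : ℕ) : Matrix (Fin b × Fin m) (Fin b × Fin m) ℂ :=
  Matrix.of fun p q => if (p.1 : ℕ) + (q.1 : ℕ) + 1 = b ∧ p.2 = q.2 then 1 else 0

/-- `F = ⊕_r E_{α r}(I_{m r})`. -/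
def bigF {N : ℕ} (α m : Fin N → ℕ) :
    Matrix (Σ r : Fin N, Fin (α r) × Fin (m r)) (Σ r : Fin N, Fin (α r) × Fin (m r)) ℂ :=
  Matrix.blockDiagonal' fun r => revE (α r) (m r)

/-- The `n × n` upper-triangular Jordan block `J_n(λ)`. -/
def Jmat (n : ℕ) (lam : ℂ) : Matrix (Fin n) (Fin n) ℂ :=
  Matrix.of fun i j => if (j : ℕ) = (i : ℕ) then lam else if (j : ℕ) = (i : ℕ) + 1 then 1 else 0

/-- The `n × n` backward identity matrix `E_n`. -/
def ErevC (n : ℕ) : Matrix (Fin n) (Fin n) ℂ :=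
  Matrix.of fun i j => if (i : ℕ) + (j : ℕ) + 1 = n then 1 else 0

/-- `P_n = (1/√2)(I + i E_n)`. -/
noncomputable def Pmat (n : ℕ) : Matrix (Fin n) (Fin n) ℂ :=
  (Real.sqrt 2 : ℂ)⁻¹ • (1 + Complex.I • ErevC n)

/-- `P_n⁻¹ = (1/√2)(I − i E_n)`. -/
noncomputable def PmatInv (n : ℕ) : Matrix (Fin n) (Fin n) ℂ :=
  (Real.sqrt 2 : ℂ)⁻¹ • (1 - Complex.I • ErevC n)

/-- The symmetric canonical form `K_n(λ) = P_n J_n(λ) P_n⁻¹` of a Jordan block. -/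
noncomputable def Kmat (n : ℕ) (lam : ℂ) : Matrix (Fin n) (Fin n) ℂ :=
  Pmat n * Jmat n lam * PmatInv n

/-- `T(A_0, …)`: the `β × β` block upper-triangular Toeplitz matrix with blocks `A_j`. -/
def blkToeplitz (β p q : ℕ) (A : ℕ → Matrix (Fin p) (Fin q) ℂ) :
    Matrix (Fin β × Fin p) (Fin β × Fin q) ℂ :=
  Matrix.of fun x y =>
    if (x.1 : ℕ) ≤ (y.1 : ℕ) then A ((y.1 : ℕ) - (x.1 : ℕ)) x.2 y.2 else 0

/-- The `(i,i)`-th `m r × m r` entry-block of the `(r,r)` diagonal block of `X`; for a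
matrix of form (0T0) this is the leading Toeplitz coefficient `A^{rr}_0`. -/
def diagLead {N : ℕ} (α m : Fin N → ℕ)
    (X : Matrix (Σ r : Fin N, Fin (α r) × Fin (m r)) (Σ r : Fin N, Fin (α r) × Fin (m r)) ℂ)
    (r : Fin N) (i : Fin (α r)) : Matrix (Fin (m r)) (Fin (m r)) ℂ :=
  Matrix.of fun a b => X ⟨r, (i, a)⟩ ⟨r, (i, b)⟩

/-- The space of skew-symmetric matrices commuting with `S`. -/
def skewCommSubmodule (ι : Type*) [Fintype ι] [DecidableEq ι] (S : Matrix ι ι ℂ) :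
    Submodule ℂ (Matrix ι ι ℂ) where
  carrier := {X | Xᵀ = -X ∧ X * S = S * X}
  add_mem' := by
    rintro a b ⟨ha1, ha2⟩ ⟨hb1, hb2⟩
    refine ⟨?_, ?_⟩
    · rw [Matrix.transpose_add, ha1, hb1, neg_add]
    · rw [add_mul, mul_add, ha2, hb2]
  zero_mem' := by
    refine ⟨?_, ?_⟩
    · simp
    · simp
  smul_mem' := by
    rintro c a ⟨h1, h2⟩
    refine ⟨?_, ?_⟩
    · rw [Matrix.transpose_smul, h1, smul_neg]
    · rw [Matrix.smul_mul, Matrix.mul_smul, h2]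

/-- The isotropy group (as a set) of `S` under orthogonal similarity. -/
def sigmaSet {ι : Type*} [Fintype ι] [DecidableEq ι] (S : Matrix ι ι ℂ) : Set (Matrix ι ι ℂ) :=
  {Q | Qᵀ * Q = 1 ∧ Qᵀ * S * Q = S}

lemma revE_mul {α m : ℕ} {n : Type*} [Fintype n] (M : Matrix (Fin α × Fin m) n ℂ) :
    revE α m * M = M.submatrix (fun p => (p.1.rev, p.2)) id := by
  ext p q
  rw [Matrix.mul_apply, Finset.sum_eq_single (p.1.rev, p.2)]
  · have h1 : revE α m p (p.1.rev, p.2) = 1 := by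
      have := p.1.isLt
      simp [revE, Fin.val_rev]
      omega
    rw [h1, one_mul, Matrix.submatrix_apply, id]
  · intro b _ hb
    have h0 : revE α m p b = 0 := by
      simp only [revE, of_apply, ite_eq_right_iff]
      rintro ⟨h1, h2⟩
      refine absurd (Prod.ext_iff.mpr ⟨?_, ?_⟩ : b = (p.1.rev, p.2)) hb
      · exact Fin.ext (by have := p.1.isLt; simp [Fin.val_rev]; omega)
      · exact h2.symm
    rw [h0, zero_mul]
  · intro h; exact absurd (Finset.mem_univ _) h

lemma mul_revE {α m : ℕ} {n : Type*} [Fintype n] (M : Matrix n (Fin α × Fin m) ℂ) :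
    M * revE α m = M.submatrix id (fun q => (q.1.rev, q.2)) := by
  ext p q
  rw [Matrix.mul_apply, Finset.sum_eq_single (q.1.rev, q.2)]
  · have h1 : revE α m (q.1.rev, q.2) q = 1 := by
      have := q.1.isLt
      simp [revE, Fin.val_rev]
      omega
    rw [h1, mul_one, Matrix.submatrix_apply, id]
  · intro b _ hb
    have h0 : revE α m b q = 0 := by
      simp only [revE, of_apply, ite_eq_right_iff]
      rintro ⟨h1, h2⟩
      refine absurd (Prod.ext_iff.mpr ⟨?_, ?_⟩ : b = (q.1.rev, q.2)) hb
      · exact Fin.ext (by have := q.1.isLt; simp [Fin.val_rev]; omega)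
      · exact h2
    rw [h0, mul_zero]
  · intro h; exact absurd (Finset.mem_univ _) h

lemma conj_toeplitz {α m : ℕ} (A : ℕ → Matrix (Fin m) (Fin m) ℂ) :
    revE α m * (blkToeplitz α m m A)ᵀ * revE α m = blkToeplitz α m m (fun n => (A n)ᵀ) := by
  rw [revE_mul, mul_revE]
  ext ⟨i, a⟩ ⟨j, b⟩
  simp only [Matrix.submatrix_apply, id, Matrix.transpose_apply, blkToeplitz, Matrix.of_apply,
    Fin.val_rev]
  have hi := i.isLt; have hj := j.isLt
  rcases le_or_gt (i : ℕ) (j : ℕ) with h | h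
  · rw [if_pos (by omega), if_pos h]
    have e : α - ((j : ℕ) + 1) ≤ α - ((i : ℕ) + 1) := by omega
    have e2 : (α - ((i : ℕ) + 1)) - (α - ((j : ℕ) + 1)) = (j : ℕ) - i := by omega
    rw [e2]
  · rw [if_neg (by omega), if_neg (by omega)]

lemma fin_sum_ite {α : ℕ} (i n : ℕ) (hn : n < α) (f : ℕ → ℂ) :
    ∑ k : Fin α, (if i ≤ (k : ℕ) ∧ (k : ℕ) ≤ n then f k else 0) = ∑ t ∈ Finset.Icc i n, f t := by
  rw [Fin.sum_univ_eq_sum_range (fun t => if i ≤ t ∧ t ≤ n then f t else 0) α,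
    ← Finset.sum_filter]
  congr 1
  ext t
  simp only [Finset.mem_filter, Finset.mem_range, Finset.mem_Icc]
  omega

lemma toeplitz_mul_apply {α m : ℕ} (B A : ℕ → Matrix (Fin m) (Fin m) ℂ)
    (i j : Fin α) (a b : Fin m) :
    (blkToeplitz α m m B * blkToeplitz α m m A) (i, a) (j, b) =
      ∑ t ∈ Finset.Icc (i : ℕ) (j : ℕ), (B (t - i) * A (j - t)) a b := by
  rw [Matrix.mul_apply, Fintype.sum_prod_type, ← fin_sum_ite (i : ℕ) (j : ℕ) j.isLt
    (fun t => (B (t - i) * A ((j : ℕ) - t)) a b)]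
  refine Finset.sum_congr rfl fun k _ => ?_
  simp only [blkToeplitz, of_apply]
  by_cases h1 : (i : ℕ) ≤ (k : ℕ) <;> by_cases h2 : (k : ℕ) ≤ (j : ℕ) <;>
    simp [h1, h2, Matrix.mul_apply, Finset.sum_mul]

lemma toeplitz_prod_eq_one_iff {m α : ℕ} (hα : 1 ≤ α) (A : ℕ → Matrix (Fin m) (Fin m) ℂ) :
    blkToeplitz α m m (fun n => (A n)ᵀ) * blkToeplitz α m m A = 1 ↔
      ((A 0)ᵀ * A 0 = 1 ∧ ∀ n, 1 ≤ n → n ≤ α - 1 →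
        ∑ t ∈ Finset.range (n + 1), (A t)ᵀ * A (n - t) = 0) := by
  constructor
  · intro h
    have he : ∀ (i j : Fin α) (a b : Fin m),
        ∑ t ∈ Finset.Icc (i : ℕ) (j : ℕ), ((A (t - i))ᵀ * A ((j : ℕ) - t)) a b
          = (1 : Matrix (Fin α × Fin m) (Fin α × Fin m) ℂ) (i, a) (j, b) := by
      intro i j a b
      have h2 := toeplitz_mul_apply (fun n => (A n)ᵀ) A i j a b
      rw [h] at h2
      exact h2.symm
    constructor
    · ext a b
      have := he ⟨0, hα⟩ ⟨0, hα⟩ a b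
      simpa [Matrix.one_apply, Prod.ext_iff] using this
    · intro n h1 hn
      have hnlt : n < α := by omega
      ext a b
      have h2 := he ⟨0, hα⟩ ⟨n, hnlt⟩ a b
      rw [Matrix.one_apply_ne (by simp [Prod.ext_iff, Fin.ext_iff]; omega)] at h2
      have hIcc : Finset.Icc 0 n = Finset.range (n + 1) := by
        ext t; simp [Finset.mem_Icc, Finset.mem_range]
      rw [hIcc] at h2
      simp only [Nat.sub_zero] at h2
      rw [Matrix.sum_apply]
      simpa using h2
  · rintro ⟨h0, hC⟩
    ext ⟨i, a⟩ ⟨j, b⟩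
    rw [toeplitz_mul_apply]
    rcases lt_trichotomy (i : ℕ) (j : ℕ) with h | h | h
    · have h1 : 1 ≤ (j : ℕ) - i := by omega
      have h2 : (j : ℕ) - i ≤ α - 1 := by have := j.isLt; omega
      have hre : ∑ t ∈ Finset.Icc (i : ℕ) (j : ℕ), ((A (t - i))ᵀ * A ((j : ℕ) - t)) a b
          = ∑ s ∈ Finset.range ((j : ℕ) - i + 1), ((A s)ᵀ * A (((j : ℕ) - i) - s)) a b := by
        refine Finset.sum_nbij' (fun t => t - (i : ℕ)) (fun s => (i : ℕ) + s) ?_ ?_ ?_ ?_ ?_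
        · intro t ht; have := Finset.mem_Icc.mp ht
          simp only [Finset.mem_range]; omega
        · intro s hs; have := Finset.mem_range.mp hs
          simp only [Finset.mem_Icc]; omega
        · intro t ht; have := Finset.mem_Icc.mp ht
          show (i : ℕ) + (t - (i : ℕ)) = t; omega
        · intro s hs; have := Finset.mem_range.mp hs
          show ((i : ℕ) + s) - (i : ℕ) = s; omega
        · intro t ht; have h5 := Finset.mem_Icc.mp ht
          show ((A (t - i))ᵀ * A ((j : ℕ) - t)) a b
            = ((A (t - (i : ℕ)))ᵀ * A (((j : ℕ) - i) - (t - (i : ℕ)))) a b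
          have e : (j : ℕ) - t = ((j : ℕ) - i) - (t - (i : ℕ)) := by omega
          rw [e]
      rw [hre, ← Matrix.sum_apply, hC _ h1 h2]
      rw [Matrix.one_apply_ne (by simp [Prod.ext_iff, Fin.ext_iff]; omega)]
      simp
    · obtain rfl : i = j := Fin.ext h
      rw [Finset.Icc_self, Finset.sum_singleton, Nat.sub_self]
      have h0' : ((A 0)ᵀ * A 0) a b = (1 : Matrix (Fin m) (Fin m) ℂ) a b := by rw [h0]
      rw [h0']
      simp [Matrix.one_apply, Prod.ext_iff]
    · rw [Finset.Icc_eq_empty (by omega), Finset.sum_empty,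
        Matrix.one_apply_ne (by simp [Prod.ext_iff, Fin.ext_iff]; omega)]

noncomputable def Wdef {m : ℕ} (c : ℕ) (B : ℕ → Matrix (Fin m) (Fin m) ℂ) :
    ℕ → Matrix (Fin m) (Fin m) ℂ
  | 0 => 0
  | (n + 1) =>
    if n + 1 ≤ c then B (n + 1)
    else -((2 : ℂ)⁻¹ • ∑ j ∈ (Finset.Icc 1 n).attach,
        (Wdef c B j.1)ᵀ * Wdef c B (n + 1 - j.1))
decreasing_by
  all_goals (have := Finset.mem_Icc.mp j.2; omega)

noncomputable def Zdef {m : ℕ} (c : ℕ) (B : ℕ → Matrix (Fin m) (Fin m) ℂ) (n : ℕ) :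
    Matrix (Fin m) (Fin m) ℂ :=
  if n = 0 then 0
  else (2 : ℂ) • Wdef c B n + ∑ j ∈ Finset.Icc 1 (n - 1), (Wdef c B j)ᵀ * Wdef c B (n - j)

lemma Wdef_eq_of_le {m c : ℕ} (B : ℕ → Matrix (Fin m) (Fin m) ℂ) {n : ℕ}
    (h1 : 1 ≤ n) (h2 : n ≤ c) : Wdef c B n = B n := by
  obtain ⟨k, rfl⟩ : ∃ k, n = k + 1 := ⟨n - 1, by omega⟩
  rw [Wdef, if_pos h2]

lemma Wdef_eq_of_gt {m c : ℕ} (B : ℕ → Matrix (Fin m) (Fin m) ℂ) {n : ℕ}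
    (h1 : 1 ≤ n) (h2 : ¬ n ≤ c) :
    Wdef c B n = -((2 : ℂ)⁻¹ • ∑ j ∈ Finset.Icc 1 (n - 1),
        (Wdef c B j)ᵀ * Wdef c B (n - j)) := by
  obtain ⟨k, rfl⟩ : ∃ k, n = k + 1 := ⟨n - 1, by omega⟩
  rw [Wdef, if_neg h2, Nat.add_sub_cancel,
    ← Finset.sum_attach (Finset.Icc 1 k) (fun j => (Wdef c B j)ᵀ * Wdef c B (k + 1 - j))]

lemma sum_split {M : Type*} [AddCommMonoid M] (n : ℕ) (hn : 1 ≤ n) (f : ℕ → M) :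
    ∑ t ∈ Finset.range (n + 1), f t = f 0 + ∑ t ∈ Finset.Icc 1 (n - 1), f t + f n := by
  have h1 : Finset.range (n + 1) = insert 0 (insert n (Finset.Icc 1 (n - 1))) := by
    ext t; simp [Finset.mem_Icc]; omega
  rw [h1, Finset.sum_insert (by simp [Finset.mem_Icc]; omega),
    Finset.sum_insert (by simp [Finset.mem_Icc]; omega)]
  abel

lemma S_symm {m : ℕ} (W : ℕ → Matrix (Fin m) (Fin m) ℂ) (k : ℕ) :
    (∑ j ∈ Finset.Icc 1 k, (W j)ᵀ * W (k + 1 - j))ᵀ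
      = ∑ j ∈ Finset.Icc 1 k, (W j)ᵀ * W (k + 1 - j) := by
  rw [Matrix.transpose_sum]
  refine Finset.sum_nbij' (fun j => k + 1 - j) (fun j => k + 1 - j) ?_ ?_ ?_ ?_ ?_
  · intro t ht; have := Finset.mem_Icc.mp ht; simp only [Finset.mem_Icc]; omega
  · intro t ht; have := Finset.mem_Icc.mp ht; simp only [Finset.mem_Icc]; omega
  · intro t ht; have := Finset.mem_Icc.mp ht
    show k + 1 - (k + 1 - t) = t; omega
  · intro t ht; have := Finset.mem_Icc.mp ht
    show k + 1 - (k + 1 - t) = t; omega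
  · intro t ht; have := Finset.mem_Icc.mp ht
    show ((W t)ᵀ * W (k + 1 - t))ᵀ = (W (k + 1 - t))ᵀ * W (k + 1 - (k + 1 - t))
    have e : k + 1 - (k + 1 - t) = t := by omega
    rw [e, Matrix.transpose_mul, Matrix.transpose_transpose]

lemma Zdef_one {m c : ℕ} (B : ℕ → Matrix (Fin m) (Fin m) ℂ) :
    Wdef c B 1 = (2 : ℂ)⁻¹ • Zdef c B 1 := by
  rw [Zdef, if_neg one_ne_zero]
  norm_num
  rw [smul_smul]
  norm_num

lemma Zdef_rec {m c : ℕ} (B : ℕ → Matrix (Fin m) (Fin m) ℂ) (n : ℕ) :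
    Wdef c B (n + 1) = (2 : ℂ)⁻¹ • (Zdef c B (n + 1)
      - ∑ j ∈ Finset.Icc 1 n, (Wdef c B j)ᵀ * Wdef c B (n + 1 - j)) := by
  rw [Zdef, if_neg (Nat.succ_ne_zero n), Nat.add_sub_cancel]
  rw [add_sub_cancel_right, smul_smul]
  norm_num

lemma Zdef_skew {m c : ℕ} (B : ℕ → Matrix (Fin m) (Fin m) ℂ)
    (hB : ∀ n, 1 ≤ n → n ≤ c →
      B n + (B n)ᵀ + ∑ j ∈ Finset.Icc 1 (n - 1), (B j)ᵀ * B (n - j) = 0) :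
    ∀ n, (Zdef c B n)ᵀ = -(Zdef c B n) := by
  intro n
  rcases Nat.eq_zero_or_pos n with h0 | h1
  · simp [Zdef, h0]
  by_cases hn : n ≤ c
  · have hZ : Zdef c B n = B n - (B n)ᵀ := by
      rw [Zdef, if_neg (by omega), Wdef_eq_of_le B h1 hn]
      have hsum : ∑ j ∈ Finset.Icc 1 (n - 1), (Wdef c B j)ᵀ * Wdef c B (n - j)
          = ∑ j ∈ Finset.Icc 1 (n - 1), (B j)ᵀ * B (n - j) := by
        refine Finset.sum_congr rfl fun j hj => ?_
        have := Finset.mem_Icc.mp hj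
        rw [Wdef_eq_of_le B (by omega) (by omega), Wdef_eq_of_le B (by omega) (by omega)]
      rw [hsum]
      have hS := eq_neg_of_add_eq_zero_right (hB n h1 hn)
      rw [hS]
      module
    rw [hZ, Matrix.transpose_sub, Matrix.transpose_transpose, neg_sub]
  · have hZ : Zdef c B n = 0 := by
      rw [Zdef, if_neg (by omega), Wdef_eq_of_gt B h1 hn]
      module
    rw [hZ]
    simp

/-- For `X = T(A_0,…,A_{α−1})` with `m × m` blocks,
`E_α(I_m)·Xᵀ·E_α(I_m)·X = 1` iff `A_0` is orthogonal and there are skew-symmetric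
`Z_1,…,Z_{α−1}` with `A_n = A_0·W_n`, where `W_1 = ½Z_1` and
`W_{n+1} = ½(Z_{n+1} − Σ_{j=1}^n W_jᵀ W_{n+1−j})`; moreover the `Z_n` (`1 ≤ n ≤ α−1`)
are uniquely determined by `X`. -/
theorem stmt11 (m α : ℕ) (hm : 1 ≤ m) (hα : 1 ≤ α)
    (A : ℕ → Matrix (Fin m) (Fin m) ℂ) :
    (revE α m * (blkToeplitz α m m A)ᵀ * revE α m * blkToeplitz α m m A = 1 ↔
      ((A 0)ᵀ * A 0 = 1 ∧
        ∃ Z W : ℕ → Matrix (Fin m) (Fin m) ℂ,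
          (∀ n, (Z n)ᵀ = -Z n) ∧
          W 1 = (2 : ℂ)⁻¹ • Z 1 ∧
          (∀ n, 1 ≤ n →
            W (n + 1) = (2 : ℂ)⁻¹ •
              (Z (n + 1) - ∑ j ∈ Finset.Icc 1 n, (W j)ᵀ * W (n + 1 - j))) ∧
          (∀ n, 1 ≤ n → n ≤ α - 1 → A n = A 0 * W n))) ∧
    -- uniqueness of Z_1, …, Z_{α−1}
    ((A 0)ᵀ * A 0 = 1 →
      ∀ Z W Z' W' : ℕ → Matrix (Fin m) (Fin m) ℂ,
        (∀ n, (Z n)ᵀ = -Z n) →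
        W 1 = (2 : ℂ)⁻¹ • Z 1 →
        (∀ n, 1 ≤ n →
          W (n + 1) = (2 : ℂ)⁻¹ •
            (Z (n + 1) - ∑ j ∈ Finset.Icc 1 n, (W j)ᵀ * W (n + 1 - j))) →
        (∀ n, 1 ≤ n → n ≤ α - 1 → A n = A 0 * W n) →
        (∀ n, (Z' n)ᵀ = -Z' n) →
        W' 1 = (2 : ℂ)⁻¹ • Z' 1 →
        (∀ n, 1 ≤ n →
          W' (n + 1) = (2 : ℂ)⁻¹ •
            (Z' (n + 1) - ∑ j ∈ Finset.Icc 1 n, (W' j)ᵀ * W' (n + 1 - j))) →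
        (∀ n, 1 ≤ n → n ≤ α - 1 → A n = A 0 * W' n) →
        ∀ n, 1 ≤ n → n ≤ α - 1 → Z n = Z' n) := by
  constructor
  · rw [conj_toeplitz, toeplitz_prod_eq_one_iff hα A]
    constructor
    · rintro ⟨h0, hC⟩
      refine ⟨h0, ?_⟩
      have h0' : A 0 * (A 0)ᵀ = 1 := mul_eq_one_comm.mp h0
      set B : ℕ → Matrix (Fin m) (Fin m) ℂ := fun n => (A 0)ᵀ * A n with hBdef
      have hB : ∀ n, 1 ≤ n → n ≤ α - 1 →
          B n + (B n)ᵀ + ∑ j ∈ Finset.Icc 1 (n - 1), (B j)ᵀ * B (n - j) = 0 := by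
        intro n h1 hn
        have hs := sum_split n h1 (fun t => (A t)ᵀ * A (n - t))
        rw [hC n h1 hn] at hs
        have e1 : (A 0)ᵀ * A (n - 0) = B n := by rw [Nat.sub_zero]
        have e2 : (A n)ᵀ * A (n - n) = (B n)ᵀ := by
          rw [Nat.sub_self, hBdef, Matrix.transpose_mul, Matrix.transpose_transpose]
        have e3 : ∀ t ∈ Finset.Icc 1 (n - 1), (A t)ᵀ * A (n - t) = (B t)ᵀ * B (n - t) := by
          intro t ht
          rw [hBdef, Matrix.transpose_mul, Matrix.transpose_transpose, Matrix.mul_assoc,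
            ← Matrix.mul_assoc (A 0), h0', Matrix.one_mul]
        rw [e1, e2, Finset.sum_congr rfl e3] at hs
        rw [← hs.symm]
        abel
      refine ⟨fun n => Zdef (α - 1) B n, fun n => Wdef (α - 1) B n,
        Zdef_skew B hB, Zdef_one B, fun n _ => Zdef_rec B n, ?_⟩
      intro n h1 hn
      show A n = A 0 * Wdef (α - 1) B n
      rw [Wdef_eq_of_le B h1 hn]
      show A n = A 0 * ((A 0)ᵀ * A n)
      rw [← Matrix.mul_assoc, h0', Matrix.one_mul]
    · rintro ⟨h0, Z, W, hskew, hW1, hrec, hAW⟩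
      refine ⟨h0, ?_⟩
      intro n h1 hn
      have claim : ∀ k, 1 ≤ k →
          W k + (W k)ᵀ + ∑ j ∈ Finset.Icc 1 (k - 1), (W j)ᵀ * W (k - j) = 0 := by
        intro k hk
        rcases Nat.lt_or_ge k 2 with hk2 | hk2
        · have hk1 : k = 1 := by omega
          subst hk1
          rw [show (1 : ℕ) - 1 = 0 from rfl, Finset.Icc_eq_empty (by omega),
            Finset.sum_empty, add_zero, hW1, Matrix.transpose_smul, hskew 1]
          module
        · obtain ⟨t, rfl⟩ : ∃ t, k = t + 1 := ⟨k - 1, by omega⟩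
          have ht : 1 ≤ t := by omega
          rw [Nat.add_sub_cancel, hrec t ht, Matrix.transpose_smul, Matrix.transpose_sub,
            hskew (t + 1), S_symm W t]
          module
      have hAn : (A 0)ᵀ * A n = W n := by
        rw [hAW n h1 hn, ← Matrix.mul_assoc, h0, Matrix.one_mul]
      rw [sum_split n h1 (fun t => (A t)ᵀ * A (n - t))]
      have e1 : (A 0)ᵀ * A (n - 0) = W n := by rw [Nat.sub_zero]; exact hAn
      have e2 : (A n)ᵀ * A (n - n) = (W n)ᵀ := by
        rw [Nat.sub_self, ← hAn, Matrix.transpose_mul, Matrix.transpose_transpose]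
      have e3 : ∀ t ∈ Finset.Icc 1 (n - 1), (A t)ᵀ * A (n - t) = (W t)ᵀ * W (n - t) := by
        intro t ht
        have := Finset.mem_Icc.mp ht
        rw [hAW t (by omega) (by omega), hAW (n - t) (by omega) (by omega),
          Matrix.transpose_mul, Matrix.mul_assoc, ← Matrix.mul_assoc ((A 0)ᵀ), h0,
          Matrix.one_mul]
      rw [e1, e2, Finset.sum_congr rfl e3, ← claim n h1]
      abel
  · intro h0 Z W Z' W' hsk hW1 hrec hAW hsk' hW1' hrec' hAW' n h1 hn
    have hWW : ∀ k, 1 ≤ k → k ≤ α - 1 → W k = W' k := by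
      intro k hk1 hk2
      have h2 := congrArg (fun M => (A 0)ᵀ * M) ((hAW k hk1 hk2).symm.trans (hAW' k hk1 hk2))
      simpa [← Matrix.mul_assoc, h0, Matrix.one_mul] using h2
    rcases Nat.lt_or_ge n 2 with h2 | h2
    · have hn1 : n = 1 := by omega
      subst hn1
      have e : Z 1 = (2 : ℂ) • W 1 := by rw [hW1, smul_smul]; norm_num
      have e' : Z' 1 = (2 : ℂ) • W' 1 := by rw [hW1', smul_smul]; norm_num
      rw [e, e', hWW 1 h1 hn]
    · obtain ⟨t, rfl⟩ : ∃ t, n = t + 1 := ⟨n - 1, by omega⟩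
      have ht : 1 ≤ t := by omega
      have hsum : ∑ j ∈ Finset.Icc 1 t, (W j)ᵀ * W (t + 1 - j)
          = ∑ j ∈ Finset.Icc 1 t, (W' j)ᵀ * W' (t + 1 - j) := by
        refine Finset.sum_congr rfl fun j hj => ?_
        have := Finset.mem_Icc.mp hj
        rw [hWW j (by omega) (by omega), hWW (t + 1 - j) (by omega) (by omega)]
      have hZ : Z (t + 1) = (2 : ℂ) • W (t + 1)
          + ∑ j ∈ Finset.Icc 1 t, (W j)ᵀ * W (t + 1 - j) := by
        rw [hrec t ht]; module
      have hZ' : Z' (t + 1) = (2 : ℂ) • W' (t + 1)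
          + ∑ j ∈ Finset.Icc 1 t, (W' j)ᵀ * W' (t + 1 - j) := by
        rw [hrec' t ht]; module
      rw [hZ, hZ', hsum, hWW (t + 1) h1 hn]
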